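/- The set of points (r_a, r_b, r_c, r_d) in ℝ^4 satisfying the nine inequalities r_a ≥ 0, r_b ≥ 0, r_c ≥ 0, r_d ≥ 0, r_a ≤ 1, r_d ≤ 1, r_b + r_c ≤ 2, r_a + r_b ≤ 2, and r_c + r_d ≤ 2 is equal to the convex hull in ℝ^4 of the 15 points (0,2,0,1), (0,2,0,0), (1,1,1,0), (1,1,0,0), (1,1,0,1), (1,0,0,1), (0,0,0,1), (0,0,0,0), (1,0,0,0), (1,0,1,1), (0,0,1,1), (0,1,1,1), (1,0,2,0), (0,0,2,0), (1,1,1,1). -/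

import Mathlib

open Matrix

private lemma segC {C : Set (Fin 4 → ℝ)} (hC : Convex ℝ C) {p q r : Fin 4 → ℝ}
    (hp : p ∈ C) (hq : q ∈ C) {t : ℝ} (h0 : 0 ≤ t) (h1 : t ≤ 1)
    (hr : r = (1 - t) • p + t • q) : r ∈ C := by
  rw [hr]; exact hC hp hq (by linarith) h0 (by ring)

private lemma mem4C {C : Set (Fin 4 → ℝ)} (hC : Convex ℝ C) {p1 p2 p3 p4 r : Fin 4 → ℝ}
    (h1 : p1 ∈ C) (h2 : p2 ∈ C) (h3 : p3 ∈ C) (h4 : p4 ∈ C)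
    {w1 w2 w3 w4 : ℝ} (hw1 : 0 ≤ w1) (hw2 : 0 ≤ w2) (hw3 : 0 ≤ w3) (hw4 : 0 ≤ w4)
    (hsum : w1 + w2 + w3 + w4 = 1)
    (hr : r = w1 • p1 + w2 • p2 + w3 • p3 + w4 • p4) : r ∈ C := by
  have h := hC.sum_mem (t := (Finset.univ : Finset (Fin 4)))
    (w := ![w1,w2,w3,w4]) (z := ![p1,p2,p3,p4])
    (by intro i _; fin_cases i <;> assumption)
    (by simp [Fin.sum_univ_four]; linarith)
    (by intro i _; fin_cases i <;> assumption)
  rw [hr]; simpa [Fin.sum_univ_four] using h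

private lemma keyC {C : Set (Fin 4 → ℝ)} (hC : Convex ℝ C)
    (m1 : ![(0:ℝ),2,0,1] ∈ C) (m2 : ![(0:ℝ),2,0,0] ∈ C) (m3 : ![(1:ℝ),1,1,0] ∈ C)
    (m4 : ![(1:ℝ),1,0,0] ∈ C) (m5 : ![(1:ℝ),1,0,1] ∈ C) (m6 : ![(1:ℝ),0,0,1] ∈ C)
    (m7 : ![(0:ℝ),0,0,1] ∈ C) (m8 : ![(0:ℝ),0,0,0] ∈ C) (m9 : ![(1:ℝ),0,0,0] ∈ C)
    (m10 : ![(1:ℝ),0,1,1] ∈ C) (m11 : ![(0:ℝ),0,1,1] ∈ C) (m12 : ![(0:ℝ),1,1,1] ∈ C)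
    (m13 : ![(1:ℝ),0,2,0] ∈ C) (m14 : ![(0:ℝ),0,2,0] ∈ C) (m15 : ![(1:ℝ),1,1,1] ∈ C)
    (r : Fin 4 → ℝ) (ha0 : 0 ≤ r 0) (hb0 : 0 ≤ r 1) (hc0 : 0 ≤ r 2) (hd0 : 0 ≤ r 3)
    (ha1 : r 0 ≤ 1) (hd1 : r 3 ≤ 1) (hbc : r 1 + r 2 ≤ 2) (hab : r 0 + r 1 ≤ 2)
    (hcd : r 2 + r 3 ≤ 2) : r ∈ C := by
  -- derived constant points
  have P0100 : ![(0:ℝ),1,0,0] ∈ C := segC hC (t := 1/2) m2 m8 (by norm_num) (by norm_num)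
    (by funext i; fin_cases i <;> norm_num)
  have P0101 : ![(0:ℝ),1,0,1] ∈ C := segC hC (t := 1/2) m1 m7 (by norm_num) (by norm_num)
    (by funext i; fin_cases i <;> norm_num)
  have P0110 : ![(0:ℝ),1,1,0] ∈ C := segC hC (t := 1/2) m14 m2 (by norm_num) (by norm_num)
    (by funext i; fin_cases i <;> norm_num)
  have P0010 : ![(0:ℝ),0,1,0] ∈ C := segC hC (t := 1/2) m14 m8 (by norm_num) (by norm_num)
    (by funext i; fin_cases i <;> norm_num)
  have P1010 : ![(1:ℝ),0,1,0] ∈ C := segC hC (t := 1/2) m13 m9 (by norm_num) (by norm_num)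
    (by funext i; fin_cases i <;> norm_num)
  rcases le_total (r 1) 1 with hb1 | hb1
  · rcases le_total (r 2) 1 with hc1 | hc1
    · -- cube region: all coordinates in [0,1]
      have q000 : ![(0:ℝ),0,0,r 3] ∈ C := segC hC m8 m7 hd0 hd1
        (by funext i; fin_cases i <;> simp <;> ring)
      have q001 : ![(0:ℝ),0,1,r 3] ∈ C := segC hC P0010 m11 hd0 hd1
        (by funext i; fin_cases i <;> simp <;> ring)
      have q010 : ![(0:ℝ),1,0,r 3] ∈ C := segC hC P0100 P0101 hd0 hd1
        (by funext i; fin_cases i <;> simp <;> ring)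
      have q011 : ![(0:ℝ),1,1,r 3] ∈ C := segC hC P0110 m12 hd0 hd1
        (by funext i; fin_cases i <;> simp <;> ring)
      have q100 : ![(1:ℝ),0,0,r 3] ∈ C := segC hC m9 m6 hd0 hd1
        (by funext i; fin_cases i <;> simp <;> ring)
      have q101 : ![(1:ℝ),0,1,r 3] ∈ C := segC hC P1010 m10 hd0 hd1
        (by funext i; fin_cases i <;> simp <;> ring)
      have q110 : ![(1:ℝ),1,0,r 3] ∈ C := segC hC m4 m5 hd0 hd1
        (by funext i; fin_cases i <;> simp <;> ring)
      have q111 : ![(1:ℝ),1,1,r 3] ∈ C := segC hC m3 m15 hd0 hd1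
        (by funext i; fin_cases i <;> simp <;> ring)
      have q00 : ![(0:ℝ),0,r 2,r 3] ∈ C := segC hC q000 q001 hc0 hc1
        (by funext i; fin_cases i <;> simp <;> ring)
      have q01 : ![(0:ℝ),1,r 2,r 3] ∈ C := segC hC q010 q011 hc0 hc1
        (by funext i; fin_cases i <;> simp <;> ring)
      have q10 : ![(1:ℝ),0,r 2,r 3] ∈ C := segC hC q100 q101 hc0 hc1
        (by funext i; fin_cases i <;> simp <;> ring)
      have q11 : ![(1:ℝ),1,r 2,r 3] ∈ C := segC hC q110 q111 hc0 hc1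
        (by funext i; fin_cases i <;> simp <;> ring)
      have q0 : ![(0:ℝ),r 1,r 2,r 3] ∈ C := segC hC q00 q01 hb0 hb1
        (by funext i; fin_cases i <;> simp <;> ring)
      have q1 : ![(1:ℝ),r 1,r 2,r 3] ∈ C := segC hC q10 q11 hb0 hb1
        (by funext i; fin_cases i <;> simp <;> ring)
      exact segC hC q0 q1 ha0 ha1 (by funext i; fin_cases i <;> simp <;> ring)
    · -- region c ≥ 1
      rcases le_total (r 1 + r 3) (2 - r 2) with h | h
      · have q0 : ![(0:ℝ),r 1,r 2,r 3] ∈ C :=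
          mem4C hC (w1 := r 2 - 1) (w2 := r 1) (w3 := r 3) (w4 := 2 - r 2 - r 1 - r 3) m14 P0110 m11 P0010 (by linarith) hb0 hd0 (by linarith) (by ring)
            (by funext i; fin_cases i <;> simp <;> ring)
        have q1 : ![(1:ℝ),r 1,r 2,r 3] ∈ C :=
          mem4C hC (w1 := r 2 - 1) (w2 := r 1) (w3 := r 3) (w4 := 2 - r 2 - r 1 - r 3) m13 m3 m10 P1010 (by linarith) hb0 hd0 (by linarith) (by ring)
            (by funext i; fin_cases i <;> simp <;> ring)
        exact segC hC q0 q1 ha0 ha1 (by funext i; fin_cases i <;> simp <;> ring)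
      · have q0 : ![(0:ℝ),r 1,r 2,r 3] ∈ C :=
          mem4C hC (w1 := r 2 - 1) (w2 := r 1 + r 3 - 2 + r 2) (w3 := 2 - r 2 - r 3) (w4 := 2 - r 2 - r 1) m14 m12 P0110 m11 (by linarith) (by linarith) (by linarith) (by linarith)
            (by ring) (by funext i; fin_cases i <;> simp <;> ring)
        have q1 : ![(1:ℝ),r 1,r 2,r 3] ∈ C :=
          mem4C hC (w1 := r 2 - 1) (w2 := r 1 + r 3 - 2 + r 2) (w3 := 2 - r 2 - r 3) (w4 := 2 - r 2 - r 1) m13 m15 m3 m10 (by linarith) (by linarith) (by linarith) (by linarith)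
            (by ring) (by funext i; fin_cases i <;> simp <;> ring)
        exact segC hC q0 q1 ha0 ha1 (by funext i; fin_cases i <;> simp <;> ring)
  · -- region b ≥ 1
    rcases le_total (r 0 + r 2) (2 - r 1) with h | h
    · have q0 : ![r 0, r 1, r 2, (0:ℝ)] ∈ C :=
        mem4C hC (w1 := r 1 - 1) (w2 := r 0) (w3 := r 2) (w4 := 2 - r 1 - r 0 - r 2) m2 m4 P0110 P0100 (by linarith) ha0 hc0 (by linarith) (by ring)
          (by funext i; fin_cases i <;> simp <;> ring)
      have q1 : ![r 0, r 1, r 2, (1:ℝ)] ∈ C :=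
        mem4C hC (w1 := r 1 - 1) (w2 := r 0) (w3 := r 2) (w4 := 2 - r 1 - r 0 - r 2) m1 m5 m12 P0101 (by linarith) ha0 hc0 (by linarith) (by ring)
          (by funext i; fin_cases i <;> simp <;> ring)
      exact segC hC q0 q1 hd0 hd1 (by funext i; fin_cases i <;> simp <;> ring)
    · have q0 : ![r 0, r 1, r 2, (0:ℝ)] ∈ C :=
        mem4C hC (w1 := r 1 - 1) (w2 := r 0 + r 2 - 2 + r 1) (w3 := 2 - r 1 - r 2) (w4 := 2 - r 1 - r 0) m2 m3 m4 P0110 (by linarith) (by linarith) (by linarith) (by linarith)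
          (by ring) (by funext i; fin_cases i <;> simp <;> ring)
      have q1 : ![r 0, r 1, r 2, (1:ℝ)] ∈ C :=
        mem4C hC (w1 := r 1 - 1) (w2 := r 0 + r 2 - 2 + r 1) (w3 := 2 - r 1 - r 2) (w4 := 2 - r 1 - r 0) m1 m15 m5 m12 (by linarith) (by linarith) (by linarith) (by linarith)
          (by ring) (by funext i; fin_cases i <;> simp <;> ring)
      exact segC hC q0 q1 hd0 hd1 (by funext i; fin_cases i <;> simp <;> ring)

set_option maxHeartbeats 2000000 in
theorem vamos_shannon_outer_bound_polytope :
    {r : Fin 4 → ℝ | 0 ≤ r 0 ∧ 0 ≤ r 1 ∧ 0 ≤ r 2 ∧ 0 ≤ r 3 ∧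
      r 0 ≤ 1 ∧ r 3 ≤ 1 ∧ r 1 + r 2 ≤ 2 ∧ r 0 + r 1 ≤ 2 ∧ r 2 + r 3 ≤ 2} =
    convexHull ℝ {![0,2,0,1], ![0,2,0,0], ![1,1,1,0], ![1,1,0,0],
      ![1,1,0,1], ![1,0,0,1], ![0,0,0,1], ![0,0,0,0],
      ![1,0,0,0], ![1,0,1,1], ![0,0,1,1], ![0,1,1,1],
      ![1,0,2,0], ![0,0,2,0], ![1,1,1,1]} := by
  apply Set.Subset.antisymm
  · intro r hr
    obtain ⟨ha0, hb0, hc0, hd0, ha1, hd1, hbc, hab, hcd⟩ := hr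
    exact keyC (convex_convexHull ℝ _)
      (subset_convexHull ℝ _ (by simp)) (subset_convexHull ℝ _ (by simp))
      (subset_convexHull ℝ _ (by simp)) (subset_convexHull ℝ _ (by simp))
      (subset_convexHull ℝ _ (by simp)) (subset_convexHull ℝ _ (by simp))
      (subset_convexHull ℝ _ (by simp)) (subset_convexHull ℝ _ (by simp))
      (subset_convexHull ℝ _ (by simp)) (subset_convexHull ℝ _ (by simp))
      (subset_convexHull ℝ _ (by simp)) (subset_convexHull ℝ _ (by simp))
      (subset_convexHull ℝ _ (by simp)) (subset_convexHull ℝ _ (by simp))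
      (subset_convexHull ℝ _ (by simp))
      r ha0 hb0 hc0 hd0 ha1 hd1 hbc hab hcd
  · apply convexHull_min
    · intro v hv
      simp only [Set.mem_insert_iff, Set.mem_singleton_iff] at hv
      rcases hv with rfl|rfl|rfl|rfl|rfl|rfl|rfl|rfl|rfl|rfl|rfl|rfl|rfl|rfl|rfl <;>
        norm_num [Set.mem_setOf_eq, Matrix.cons_val_two, Matrix.cons_val_three, Matrix.vecHead, Matrix.vecTail]
    · intro x hx y hy α β hα hβ hαβ
      obtain ⟨x0, x1, x2, x3, x4, x5, x6, x7, x8⟩ := hx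
      obtain ⟨y0, y1, y2, y3, y4, y5, y6, y7, y8⟩ := hy
      simp only [Set.mem_setOf_eq, Pi.add_apply, Pi.smul_apply, smul_eq_mul]
      refine ⟨?_, ?_, ?_, ?_, ?_, ?_, ?_, ?_, ?_⟩
      · nlinarith [mul_nonneg hα x0, mul_nonneg hβ y0]
      · nlinarith [mul_nonneg hα x1, mul_nonneg hβ y1]
      · nlinarith [mul_nonneg hα x2, mul_nonneg hβ y2]
      · nlinarith [mul_nonneg hα x3, mul_nonneg hβ y3]
      · nlinarith [mul_le_mul_of_nonneg_left x4 hα, mul_le_mul_of_nonneg_left y4 hβ]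
      · nlinarith [mul_le_mul_of_nonneg_left x5 hα, mul_le_mul_of_nonneg_left y5 hβ]
      · nlinarith [mul_le_mul_of_nonneg_left x6 hα, mul_le_mul_of_nonneg_left y6 hβ]
      · nlinarith [mul_le_mul_of_nonneg_left x7 hα, mul_le_mul_of_nonneg_left y7 hβ]
      · nlinarith [mul_le_mul_of_nonneg_left x8 hα, mul_le_mul_of_nonneg_left y8 hβ]
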